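/- Let E̅₁, E̅₂ be upper expectation functionals and T̅ an upper transition operator with weak coefficient of ergodicity ρ(T̅) = max_{x,y∈X} max_{f∈L₁} |T̅(f|x) - T̅(f|y)|. Then d(E̅₁∘T̅, E̅₂∘T̅) ≤ d(E̅₁, E̅₂) · ρ(T̅), where d(E̅₁,E̅₂) = max_{f∈L₁} |E̅₁(f) - E̅₂(f)|. -/

import Mathlib

open Finset Set

noncomputable section

/-- Functions with values in [0,1]. -/
def L1 (X : Type*) : Set (X → ℝ) := {f | ∀ x, 0 ≤ f x ∧ f x ≤ 1}

/-- Probability mass function on a finite set. -/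
def IsPMF {X : Type*} [Fintype X] (p : X → ℝ) : Prop :=
  (∀ x, 0 ≤ p x) ∧ ∑ x, p x = 1

/-- A credal set: nonempty compact convex set of pmfs. -/
def IsCredal {X : Type*} [Fintype X] (M : Set (X → ℝ)) : Prop :=
  M.Nonempty ∧ IsCompact M ∧ Convex ℝ M ∧ ∀ p ∈ M, IsPMF p

/-- Linear expectation with respect to a pmf. -/
def linExp {X : Type*} [Fintype X] (p f : X → ℝ) : ℝ := ∑ x, p x * f x

/-- Upper expectation functional of a credal set. -/
def upperExp {X : Type*} [Fintype X] (M : Set (X → ℝ)) (f : X → ℝ) : ℝ :=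
  sSup ((fun p => linExp p f) '' M)

/-- Lower expectation functional of a credal set. -/
def lowerExp {X : Type*} [Fintype X] (M : Set (X → ℝ)) (f : X → ℝ) : ℝ :=
  sInf ((fun p => linExp p f) '' M)

/-- Chebyshev (sup) distance between functions. -/
def dCheb {X : Type*} (f g : X → ℝ) : ℝ := ⨆ x, |f x - g x|

/-- Distance between two (upper) expectation functionals. -/
def dFun {X : Type*} (F G : (X → ℝ) → ℝ) : ℝ :=
  sSup ((fun f => |F f - G f|) '' L1 X)

/-- Distance between an upper and a lower expectation functional. -/
def dUL {X : Type*} (F G : (X → ℝ) → ℝ) : ℝ :=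
  sSup ((fun f => F f - G f) '' L1 X)

/-- Upper transition operator: rows are upper expectation functionals. -/
def IsUpperTrans {X : Type*} [Fintype X] (T : (X → ℝ) → (X → ℝ)) : Prop :=
  ∃ M : X → Set (X → ℝ), (∀ x, IsCredal (M x)) ∧ ∀ f x, T f x = upperExp (M x) f

/-- Matching pair of upper and lower transition operators from the same credal sets. -/
def IsTransPair {X : Type*} [Fintype X] (T Tl : (X → ℝ) → (X → ℝ)) : Prop :=
  ∃ M : X → Set (X → ℝ), (∀ x, IsCredal (M x)) ∧
    (∀ f x, T f x = upperExp (M x) f) ∧ (∀ f x, Tl f x = lowerExp (M x) f)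

/-- Distance between two (upper) transition operators. -/
def dOp {X : Type*} (T T' : (X → ℝ) → (X → ℝ)) : ℝ :=
  sSup ((fun f => dCheb (T f) (T' f)) '' L1 X)

/-- Imprecision distance between an upper and a lower transition operator. -/
def dOpUL {X : Type*} (T Tl : (X → ℝ) → (X → ℝ)) : ℝ :=
  sSup ((fun f => ⨆ x, (T f x - Tl f x)) '' L1 X)

/-- Weak coefficient of ergodicity. -/
def rho {X : Type*} (T : (X → ℝ) → (X → ℝ)) : ℝ :=
  sSup {r | ∃ f ∈ L1 X, ∃ x y : X, r = |T f x - T f y|}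


lemma linExp_bounds {X : Type*} [Fintype X] {p f : X → ℝ} (hp : IsPMF p)
    (hf : f ∈ L1 X) : 0 ≤ linExp p f ∧ linExp p f ≤ 1 := by
  constructor
  · exact Finset.sum_nonneg fun x _ => mul_nonneg (hp.1 x) (hf x).1
  · calc linExp p f ≤ ∑ x, p x * 1 :=
          Finset.sum_le_sum fun x _ => mul_le_mul_of_nonneg_left (hf x).2 (hp.1 x)
      _ = 1 := by simp [hp.2]

lemma credal_exists_max {X : Type*} [Fintype X] {M : Set (X → ℝ)}
    (hM : IsCredal M) (f : X → ℝ) :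
    ∃ p ∈ M, upperExp M f = linExp p f ∧ ∀ q ∈ M, linExp q f ≤ linExp p f := by
  have hcont : Continuous fun p : X → ℝ => linExp p f := by
    unfold linExp
    exact continuous_finset_sum _ fun x _ => (continuous_apply x).mul continuous_const
  obtain ⟨p, hp, hmax⟩ := hM.2.1.exists_isMaxOn hM.1 hcont.continuousOn
  refine ⟨p, hp, ?_, fun q hq => hmax hq⟩
  apply le_antisymm
  · apply csSup_le (hM.1.image _)
    rintro _ ⟨q, hq, rfl⟩; exact hmax hq
  · exact le_csSup ((hM.2.1.image hcont).bddAbove) ⟨p, hp, rfl⟩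

lemma upperExp_bounds {X : Type*} [Fintype X] {M : Set (X → ℝ)} {f : X → ℝ}
    (hM : IsCredal M) (hf : f ∈ L1 X) : 0 ≤ upperExp M f ∧ upperExp M f ≤ 1 := by
  obtain ⟨p, hp, heq, hmax⟩ := credal_exists_max hM f
  rw [heq]
  exact linExp_bounds (hM.2.2.2 p hp) hf

lemma upperExp_affine {X : Type*} [Fintype X] {M : Set (X → ℝ)} (hM : IsCredal M)
    (f : X → ℝ) (a b : ℝ) (ha : 0 ≤ a) :
    upperExp M (fun x => a * f x + b) = a * upperExp M f + b := by
  obtain ⟨p, hp, heq, hmax⟩ := credal_exists_max hM f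
  have key : ∀ q ∈ M, linExp q (fun x => a * f x + b) = a * linExp q f + b := by
    intro q hq
    have hpmf := hM.2.2.2 q hq
    unfold linExp
    rw [Finset.sum_congr rfl (fun x _ => by ring_nf :
      ∀ x ∈ Finset.univ, q x * (a * f x + b) = a * (q x * f x) + b * q x)]
    rw [Finset.sum_add_distrib, ← Finset.mul_sum, ← Finset.mul_sum, hpmf.2, mul_one]
  rw [heq]
  apply le_antisymm
  · apply csSup_le (hM.1.image _)
    rintro _ ⟨q, hq, rfl⟩
    dsimp only
    rw [key q hq]
    have := hmax q hq
    nlinarith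
  · have h' : a * linExp p f + b = linExp p (fun x => a * f x + b) := (key p hp).symm
    rw [h']
    have hcont : Continuous fun q : X → ℝ => linExp q (fun x => a * f x + b) := by
      unfold linExp
      exact continuous_finset_sum _ fun x _ => (continuous_apply x).mul continuous_const
    exact le_csSup ((hM.2.1.image hcont).bddAbove) ⟨p, hp, rfl⟩

theorem stmt8 {X : Type*} [Fintype X] [Nonempty X]
    (M1 M2 : Set (X → ℝ)) (h1 : IsCredal M1) (h2 : IsCredal M2)
    (T : (X → ℝ) → (X → ℝ)) (hT : IsUpperTrans T) :
    dFun (fun f => upperExp M1 (T f)) (fun f => upperExp M2 (T f)) ≤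
      dFun (upperExp M1) (upperExp M2) * rho T :=  by
  obtain ⟨MT, hMT, hTf⟩ := hT
  have hT01 : ∀ f ∈ L1 X, ∀ x, 0 ≤ T f x ∧ T f x ≤ 1 := by
    intro f hf x
    rw [hTf f x]
    exact upperExp_bounds (hMT x) hf
  have hzero : (fun _ : X => (0:ℝ)) ∈ L1 X := fun x => ⟨le_refl 0, zero_le_one⟩
  -- boundedness of dFun set
  have hd_bdd : BddAbove ((fun f => |upperExp M1 f - upperExp M2 f|) '' L1 X) := by
    refine ⟨1, ?_⟩
    rintro _ ⟨f, hf, rfl⟩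
    have b1 := upperExp_bounds h1 hf
    have b2 := upperExp_bounds h2 hf
    rw [abs_sub_le_iff]; constructor <;> linarith [b1.1, b1.2, b2.1, b2.2]
  have hd0 : 0 ≤ dFun (upperExp M1) (upperExp M2) := by
    have := le_csSup hd_bdd ⟨(fun _ => (0:ℝ)), hzero, rfl⟩
    exact le_trans (abs_nonneg _) this
  -- boundedness of rho set
  have hr_bdd : BddAbove {r | ∃ f ∈ L1 X, ∃ x y : X, r = |T f x - T f y|} := by
    refine ⟨1, ?_⟩
    rintro r ⟨f, hf, x, y, rfl⟩
    have bx := hT01 f hf x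
    have by' := hT01 f hf y
    rw [abs_sub_le_iff]; constructor <;> linarith [bx.1, bx.2, by'.1, by'.2]
  have hr0 : 0 ≤ rho T := by
    have x0 : X := Classical.arbitrary X
    have : (0:ℝ) ∈ {r | ∃ f ∈ L1 X, ∃ x y : X, r = |T f x - T f y|} :=
      ⟨(fun _ => 0), hzero, x0, x0, by simp⟩
    exact le_csSup hr_bdd this
  apply Real.sSup_le
  · rintro _ ⟨f, hf, rfl⟩
    -- per-f bound
    obtain ⟨y0, _, hy0⟩ := Finset.exists_min_image Finset.univ (T f) Finset.univ_nonempty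
    set m := T f y0 with hm
    have hmle : ∀ x, m ≤ T f x := fun x => hy0 x (Finset.mem_univ x)
    have hler : ∀ x, T f x - m ≤ rho T := by
      intro x
      have hmem : |T f x - T f y0| ∈ {r | ∃ f ∈ L1 X, ∃ x y : X, r = |T f x - T f y|} :=
        ⟨f, hf, x, y0, rfl⟩
      have hle2 : |T f x - T f y0| ≤ rho T := le_csSup hr_bdd hmem
      have habs : T f x - m ≤ |T f x - T f y0| := le_abs_self _
      linarith
    dsimp only
    rcases eq_or_lt_of_le hr0 with h0 | hpos
    · -- rho = 0, T f constant
      have hconst : ∀ x, T f x = m := fun x =>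
        le_antisymm (by have := hler x; linarith) (hmle x)
      have hfe : T f = fun x => 0 * f x + m := funext fun x => by rw [hconst x]; ring
      rw [hfe, upperExp_affine h1 f 0 m (le_refl 0), upperExp_affine h2 f 0 m (le_refl 0)]
      simp [← h0]
    · -- rho > 0
      set r := rho T
      set g : X → ℝ := fun x => (T f x - m) / r with hg
      have hgL1 : g ∈ L1 X := by
        intro x
        constructor
        · exact div_nonneg (by linarith [hmle x]) (le_of_lt hpos)
        · rw [div_le_one hpos]; exact hler x
      have hfe : T f = fun x => r * g x + m := funext fun x => by
        simp only [hg]; field_simp; ring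
      rw [hfe, upperExp_affine h1 g r m (le_of_lt hpos),
        upperExp_affine h2 g r m (le_of_lt hpos)]
      have hgd : |upperExp M1 g - upperExp M2 g| ≤ dFun (upperExp M1) (upperExp M2) :=
        le_csSup hd_bdd ⟨g, hgL1, rfl⟩
      calc |r * upperExp M1 g + m - (r * upperExp M2 g + m)|
          = r * |upperExp M1 g - upperExp M2 g| := by
            rw [show r * upperExp M1 g + m - (r * upperExp M2 g + m)
              = r * (upperExp M1 g - upperExp M2 g) from by ring,
              abs_mul, abs_of_pos hpos]
        _ ≤ r * dFun (upperExp M1) (upperExp M2) :=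
            mul_le_mul_of_nonneg_left hgd (le_of_lt hpos)
        _ = dFun (upperExp M1) (upperExp M2) * r := mul_comm _ _
  · exact mul_nonneg hd0 hr0
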